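/- Let M and L be positive integers with L < M. There exist L partitions (floor divisions) of {1,...,M}, indexed by t = 0,...,L-1, each into intervals (modulo M) of length at most L, together with a choice of at most one distinguished element (marginal row) in each block of each partition, such that: (i) within each partition, removing all marginal rows leaves blocks that are pairwise non-adjacent as subsets of {1,...,M} (no two remaining elements from distinct blocks differ by 1); and (ii) every element of {1,...,M} is a marginal row in exactly one of the L partitions. -/

import Mathlib

/-- A cyclic interval (modulo `M`) of `{1,...,M}` of length at most `L`:
the image of `{0,...,k-1}` (for some `k ≤ L`) under `i ↦ (s + i) % M + 1`. -/
def IsCyclicInterval (M L : ℕ) (B : Finset ℕ) : Prop :=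
  ∃ s k : ℕ, k ≤ L ∧ B = (Finset.range k).image (fun i => (s + i) % M + 1)

/-- index of the block (for shift `t`) containing `m`. -/
def bidx (L t m : ℕ) : ℕ := if m ≤ t then 0 else (m - t - 1) / L + 1

/-- the block (for shift `t`) containing `m`. -/
def blk (M L t m : ℕ) : Finset ℕ :=
  (Finset.Icc 1 M).filter (fun m' => bidx L t m' = bidx L t m)

lemma div_eq_iff'' {L : ℕ} (hL : 0 < L) (n j : ℕ) :
    n / L = j ↔ j * L ≤ n ∧ n < j * L + L := by
  constructor
  · intro h
    have h1 := Nat.div_add_mod n L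
    have h2 := Nat.mod_lt n hL
    have h3 : L * (n / L) = (n / L) * L := Nat.mul_comm _ _
    subst h
    omega
  · rintro ⟨h1, h2⟩
    refine Nat.div_eq_of_lt_le h1 ?_
    have : (j + 1) * L = j * L + L := by ring
    omega

lemma bidx_eq_zero {L : ℕ} (t x : ℕ) : bidx L t x = 0 ↔ x ≤ t := by
  unfold bidx
  split_ifs with h <;> simp [h]

lemma bidx_eq_succ {L : ℕ} (hL : 0 < L) (t x j : ℕ) :
    bidx L t x = j + 1 ↔ t + 1 + j * L ≤ x ∧ x ≤ t + j * L + L := by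
  unfold bidx
  split_ifs with h
  · constructor
    · intro h0; exact h0.elim
    · rintro ⟨h1, h2⟩; omega
  · rw [Nat.add_left_cancel_iff (n := 1) |>.symm]
    constructor
    · intro h0
      have h0' : (x - t - 1) / L = j := by omega
      have := (div_eq_iff'' hL (x - t - 1) j).mp h0'
      omega
    · rintro ⟨h1, h2⟩
      have : (x - t - 1) / L = j := (div_eq_iff'' hL (x - t - 1) j).mpr (by omega)
      omega

/-- An honest interval `Icc a b ⊆ [1,M]` is a cyclic interval. -/
lemma icc_cyclic {M : ℕ} (a b : ℕ) (ha : 1 ≤ a) (hb : b ≤ M) :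
    Finset.Icc a b = (Finset.range (b + 1 - a)).image (fun i => (a - 1 + i) % M + 1) := by
  ext x
  simp only [Finset.mem_Icc, Finset.mem_image, Finset.mem_range]
  constructor
  · rintro ⟨h1, h2⟩
    exact ⟨x - a, by omega, by rw [Nat.mod_eq_of_lt (by omega)]; omega⟩
  · rintro ⟨i, hi, rfl⟩
    rw [Nat.mod_eq_of_lt (by omega)]
    omega

/-- Each block is an interval `Icc a b` with good bounds. -/
lemma blk_eq_Icc {M L : ℕ} (hL : 0 < L) (hLM : L < M) {t m : ℕ} (ht : t < L)
    (hm1 : 1 ≤ m) (hm2 : m ≤ M) :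
    ∃ a b, blk M L t m = Finset.Icc a b ∧ 1 ≤ a ∧ b ≤ M ∧ a ≤ m ∧ m ≤ b ∧ b + 1 - a ≤ L := by
  rcases le_or_gt m t with h | h
  · refine ⟨1, t, ?_, le_refl _, by omega, hm1, h, by omega⟩
    ext x
    simp only [blk, Finset.mem_filter, Finset.mem_Icc]
    rw [(bidx_eq_zero t m).mpr h, bidx_eq_zero]
    omega
  · set j := (m - t - 1) / L with hj
    have hjm : j * L ≤ m - t - 1 ∧ m - t - 1 < j * L + L := (div_eq_iff'' hL _ _).mp hj.symm
    refine ⟨t + 1 + j * L, min (t + j * L + L) M, ?_, by omega, by omega, by omega, by omega, by omega⟩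
    have hbm : bidx L t m = j + 1 := (bidx_eq_succ hL t m j).mpr (by omega)
    ext x
    simp only [blk, Finset.mem_filter, Finset.mem_Icc, hbm]
    rw [bidx_eq_succ hL]
    omega

/-- Key adjacency fact: if `x` and `x+1` are in different blocks, then `x % L = t`. -/
lemma adj_key {L : ℕ} (hL : 0 < L) {t x : ℕ} (ht : t < L)
    (hne : bidx L t x ≠ bidx L t (x + 1)) : x % L = t := by
  rcases le_or_gt x t with h | h
  · -- then x = t, else both indices are 0
    have hx : x = t := by
      by_contra hxt
      have h1 : x + 1 ≤ t := by omega
      rw [(bidx_eq_zero t x).mpr h, (bidx_eq_zero t (x + 1)).mpr h1] at hne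
      exact hne rfl
    rw [hx, Nat.mod_eq_of_lt ht]
  · -- d = x - t ≥ 1, indices are (d-1)/L + 1 and d/L + 1, differ iff L ∣ d
    have h1 : bidx L t x = (x - t - 1) / L + 1 := by
      rw [bidx_eq_succ hL]
      have := (div_eq_iff'' hL (x - t - 1) ((x - t - 1) / L)).mp rfl
      omega
    have h2 : bidx L t (x + 1) = (x - t) / L + 1 := by
      rw [bidx_eq_succ hL]
      have := (div_eq_iff'' hL (x - t) ((x - t) / L)).mp rfl
      omega
    rw [h1, h2] at hne
    have hd : x - t = (x - t - 1) + 1 := by omega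
    have hsucc := Nat.succ_div (a := x - t - 1) (b := L)
    rw [← hd] at hsucc
    have hdvd : L ∣ x - t := by
      by_contra hndvd
      rw [if_neg hndvd] at hsucc
      omega
    obtain ⟨c, hc⟩ := hdvd
    have hx : x = t + L * c := by omega
    rw [hx, Nat.add_mul_mod_self_left, Nat.mod_eq_of_lt ht]

theorem stmt_1 (M L : ℕ) (hM : 0 < M) (hL : 0 < L) (hLM : L < M) :
    ∃ (P : Fin L → Finset (Finset ℕ)) (Marg : Fin L → Finset ℕ),
      (∀ t : Fin L,
        -- each `P t` is a partition of `{1,...,M}` into cyclic intervals of length ≤ L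
        (∀ B ∈ P t, B.Nonempty ∧ B.card ≤ L ∧ IsCyclicInterval M L B) ∧
        ((P t : Set (Finset ℕ)).PairwiseDisjoint id) ∧
        ((P t).biUnion id = Finset.Icc 1 M) ∧
        -- marginal rows: at most one distinguished element in each block
        Marg t ⊆ Finset.Icc 1 M ∧
        (∀ B ∈ P t, (B ∩ Marg t).card ≤ 1) ∧
        -- (i) after removing marginal rows, distinct blocks are non-adjacent
        (∀ B ∈ P t, ∀ B' ∈ P t, B ≠ B' →
          ∀ x ∈ B \ Marg t, ∀ y ∈ B' \ Marg t, x + 1 ≠ y ∧ y + 1 ≠ x)) ∧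
      -- (ii) every element of `{1,...,M}` is a marginal row in exactly one partition
      (∀ m ∈ Finset.Icc 1 M, ∃! t : Fin L, m ∈ Marg t) := by
  refine ⟨fun t => (Finset.Icc 1 M).image (blk M L t.val),
          fun t => (Finset.Icc 1 M).filter (fun m => (m - 1) % L = t.val), ?_, ?_⟩
  · intro t
    have ht : (t : ℕ) < L := t.isLt
    -- membership in a block characterization
    have hmem : ∀ m, ∀ x, x ∈ blk M L t.val m ↔ (1 ≤ x ∧ x ≤ M ∧ bidx L t.val x = bidx L t.val m) := by
      intro m x
      simp only [blk, Finset.mem_filter, Finset.mem_Icc]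
      tauto
    have hself : ∀ m, 1 ≤ m → m ≤ M → m ∈ blk M L t.val m := by
      intro m h1 h2; rw [hmem]; exact ⟨h1, h2, rfl⟩
    refine ⟨?_, ?_, ?_, Finset.filter_subset _ _, ?_, ?_⟩
    · -- blocks: nonempty, small, cyclic intervals
      intro B hB
      obtain ⟨m, hm, rfl⟩ := Finset.mem_image.mp hB
      rw [Finset.mem_Icc] at hm
      obtain ⟨a, b, hIcc, ha, hb, ham, hmb, hlen⟩ := blk_eq_Icc hL hLM ht hm.1 hm.2
      refine ⟨⟨m, hself m hm.1 hm.2⟩, ?_, ?_⟩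
      · rw [hIcc, Nat.card_Icc]; omega
      · exact ⟨a - 1 + 0, b + 1 - a, hlen, by rw [hIcc, icc_cyclic a b ha hb]; simp⟩
    · -- pairwise disjoint
      intro B hB B' hB' hne
      simp only [Finset.coe_image, Set.mem_image] at hB hB'
      obtain ⟨m, hm, rfl⟩ := hB
      obtain ⟨m', hm', rfl⟩ := hB'
      refine Finset.disjoint_left.mpr fun x hx hx' => hne ?_
      replace hx : x ∈ blk M L t.val m := hx
      replace hx' : x ∈ blk M L t.val m' := hx'
      rw [hmem] at hx hx'
      unfold blk
      rw [← hx.2.2, ← hx'.2.2]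
    · -- biUnion
      ext x
      simp only [Finset.mem_biUnion, Finset.mem_image, id]
      constructor
      · rintro ⟨B, ⟨m, hm, rfl⟩, hx⟩
        rw [hmem] at hx
        rw [Finset.mem_Icc]; exact ⟨hx.1, hx.2.1⟩
      · intro hx
        rw [Finset.mem_Icc] at hx
        exact ⟨blk M L t.val x, ⟨x, Finset.mem_Icc.mpr hx, rfl⟩, hself x hx.1 hx.2⟩
    · -- at most one marginal per block
      intro B hB
      obtain ⟨m, hm, rfl⟩ := Finset.mem_image.mp hB
      rw [Finset.mem_Icc] at hm
      obtain ⟨a, b, hIcc, ha, hb, ham, hmb, hlen⟩ := blk_eq_Icc hL hLM ht hm.1 hm.2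
      refine Finset.card_le_one.mpr fun x hx y hy => ?_
      simp only [Finset.mem_inter, Finset.mem_filter, hIcc, Finset.mem_Icc] at hx hy
      obtain ⟨⟨hx1, hx2⟩, _, hx3⟩ := hx
      obtain ⟨⟨hy1, hy2⟩, _, hy3⟩ := hy
      have hxy : (x - 1) % L = (y - 1) % L := by rw [hx3, hy3]
      rcases le_or_gt x y with hle | hlt
      · have hdvd := (Nat.modEq_iff_dvd' (by omega)).mp hxy
        obtain ⟨c, hc⟩ := hdvd
        rcases Nat.eq_zero_or_pos c with rfl | hc0
        · omega
        · have : L ≤ L * c := Nat.le_mul_of_pos_right L hc0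
          omega
      · have hdvd := (Nat.modEq_iff_dvd' (by omega)).mp hxy.symm
        obtain ⟨c, hc⟩ := hdvd
        rcases Nat.eq_zero_or_pos c with rfl | hc0
        · omega
        · have : L ≤ L * c := Nat.le_mul_of_pos_right L hc0
          omega
    · -- adjacency
      intro B hB B' hB' hne x hx y hy
      obtain ⟨m, hm, rfl⟩ := Finset.mem_image.mp hB
      obtain ⟨m', hm', rfl⟩ := Finset.mem_image.mp hB'
      rw [Finset.mem_sdiff] at hx hy
      obtain ⟨hxB, hxM⟩ := hx
      obtain ⟨hyB, hyM⟩ := hy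
      rw [hmem] at hxB hyB
      simp only [Finset.mem_filter, Finset.mem_Icc, not_and] at hxM hyM
      have hxM' : (x - 1) % L ≠ t.val := hxM ⟨hxB.1, hxB.2.1⟩
      have hyM' : (y - 1) % L ≠ t.val := hyM ⟨hyB.1, hyB.2.1⟩
      have hbne : bidx L t.val x ≠ bidx L t.val y := by
        intro h
        apply hne
        unfold blk
        rw [← hxB.2.2, ← hyB.2.2, h]
      constructor
      · intro hxy
        apply hyM'
        rw [← hxy] at hbne ⊢
        have := adj_key hL ht hbne
        simpa using this
      · intro hyx
        apply hxM'
        rw [← hyx] at hbne ⊢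
        have := adj_key hL ht (Ne.symm hbne)
        simpa using this
  · -- (ii)
    intro m hm
    refine ⟨⟨(m - 1) % L, Nat.mod_lt _ hL⟩, ?_, ?_⟩
    · simp only [Finset.mem_filter]
      exact ⟨hm, trivial⟩
    · intro t htmem
      simp only [Finset.mem_filter] at htmem
      exact Fin.ext htmem.2.symm
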